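/- Let m ≥ 3 and let f, ḟ : ZMod m → ℝ³. Let n ∈ ℝ³ with ‖n‖ = 1, let h ∈ ℝ, and suppose ⟨fᵢ, n⟩ = h and ⟨ḟᵢ, n⟩ = 1 for all i. For each i ∈ ZMod m let Nᵢ ∈ ℝ³ with ‖Nᵢ‖ = 1, and suppose: f_{i+1} ≠ fᵢ; ⟨f_{i+1} − fᵢ, Nᵢ⟩ = 0; ⟨ḟᵢ, Nᵢ⟩ = 1 and ⟨ḟ_{i+1}, Nᵢ⟩ = 1. Set ℓᵢ := ‖f_{i+1} − fᵢ‖ and sᵢ := ⟨n × Nᵢ, (f_{i+1} − fᵢ)/ℓᵢ⟩, and assume sᵢ ≠ 0 for all i. Then ½ ∑_{i ∈ ZMod m} (⟨ḟᵢ × f_{i+1}, n⟩ + ⟨fᵢ × ḟ_{i+1}, n⟩) = ∑_{i ∈ ZMod m} ℓᵢ (1 − ⟨n, Nᵢ⟩)/sᵢ. -/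

import Mathlib

open scoped RealInnerProductSpace

/-- The vector `(x, y, z)` in Euclidean 3-space. -/
noncomputable def e3 (x y z : ℝ) : EuclideanSpace ℝ (Fin 3) :=
  (WithLp.equiv 2 _).symm ![x, y, z]

/-- The cross product in Euclidean 3-space. -/
noncomputable def cross3 (a b : EuclideanSpace ℝ (Fin 3)) : EuclideanSpace ℝ (Fin 3) :=
  e3 (a 1 * b 2 - a 2 * b 1) (a 2 * b 0 - a 0 * b 2) (a 0 * b 1 - a 1 * b 0)

/-- Inverse stereographic projection `n(z) = (1 + |z|²)⁻¹ (2 Re z, 2 Im z, |z|² - 1)`. -/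
noncomputable def invStereo (z : ℂ) : EuclideanSpace ℝ (Fin 3) :=
  (1 + ‖z‖ ^ 2)⁻¹ • e3 (2 * z.re) (2 * z.im) (‖z‖ ^ 2 - 1)

/-- The Weierstrass edge vector `W = (gⱼ - gᵢ)⁻¹ • (1 - gᵢgⱼ, √(-1)(1 + gᵢgⱼ), gᵢ + gⱼ) ∈ ℂ³`. -/
noncomputable def wVec (gi gj : ℂ) : Fin 3 → ℂ :=
  (gj - gi)⁻¹ • ![1 - gi * gj, Complex.I * (1 + gi * gj), gi + gj]

/-- Componentwise imaginary part of a vector in ℂ³, as a vector in ℝ³. -/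
noncomputable def imVec (W : Fin 3 → ℂ) : EuclideanSpace ℝ (Fin 3) :=
  e3 (W 0).im (W 1).im (W 2).im

/-- Componentwise real part of a vector in ℂ³, as a vector in ℝ³. -/
noncomputable def reVec (W : Fin 3 → ℂ) : EuclideanSpace ℝ (Fin 3) :=
  e3 (W 0).re (W 1).re (W 2).re


lemma inner3 (x y : EuclideanSpace ℝ (Fin 3)) : ⟪x, y⟫ = x 0 * y 0 + x 1 * y 1 + x 2 * y 2 := by
  simp [PiLp.inner_apply, Fin.sum_univ_three, RCLike.inner_apply, mul_comm]

lemma e3_0 (x y z : ℝ) : e3 x y z 0 = x := rfl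
lemma e3_1 (x y z : ℝ) : e3 x y z 1 = y := rfl
lemma e3_2 (x y z : ℝ) : e3 x y z 2 = z := rfl

lemma quad3 (n e q N : EuclideanSpace ℝ (Fin 3)) :
    ⟪cross3 n e, q⟫ * ⟪cross3 n e, N⟫ =
      (⟪n,n⟫*⟪e,e⟫ - ⟪n,e⟫^2) * ⟪q,N⟫ - ⟪n,n⟫*⟪q,e⟫*⟪e,N⟫ + ⟪n,e⟫*⟪q,e⟫*⟪n,N⟫
        - ⟪e,e⟫*⟪q,n⟫*⟪n,N⟫ + ⟪n,e⟫*⟪q,n⟫*⟪e,N⟫ := by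
  simp only [inner3, cross3, e3_0, e3_1, e3_2]
  ring

lemma triple_swap (a b c : EuclideanSpace ℝ (Fin 3)) :
    ⟪cross3 a b, c⟫ = -⟪cross3 a c, b⟫ := by
  simp only [inner3, cross3, e3_0, e3_1, e3_2]
  ring

/-- Infinitesimal discrete Steiner formula (Karpenkov–Wallner), single face: offsetting every
face in parallel at unit speed, the derivative of the signed face area equals `2H`, i.e.
`½ d(Area) = ∑ᵢ ℓᵢ(1 − ⟨n, Nᵢ⟩)/sᵢ`. -/
theorem stmt_11 (m : ℕ) [NeZero m] (hm : 3 ≤ m)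
    (f fdot : ZMod m → EuclideanSpace ℝ (Fin 3))
    (n : EuclideanSpace ℝ (Fin 3)) (hn : ‖n‖ = 1)
    (h : ℝ)
    (hf : ∀ i, ⟪f i, n⟫ = h) (hfdot : ∀ i, ⟪fdot i, n⟫ = 1)
    (N : ZMod m → EuclideanSpace ℝ (Fin 3)) (hN : ∀ i, ‖N i‖ = 1)
    (hne : ∀ i, f (i + 1) ≠ f i)
    (horth : ∀ i, ⟪f (i + 1) - f i, N i⟫ = 0)
    (hh1 : ∀ i, ⟪fdot i, N i⟫ = 1) (hh2 : ∀ i, ⟪fdot (i + 1), N i⟫ = 1)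
    (ℓ : ZMod m → ℝ) (hℓ : ∀ i, ℓ i = ‖f (i + 1) - f i‖)
    (s : ZMod m → ℝ) (hs : ∀ i, s i = ⟪cross3 n (N i), (ℓ i)⁻¹ • (f (i + 1) - f i)⟫)
    (hs0 : ∀ i, s i ≠ 0) :
    (1 / 2) * ∑ i, (⟪cross3 (fdot i) (f (i + 1)), n⟫ + ⟪cross3 (f i) (fdot (i + 1)), n⟫) =
      ∑ i, ℓ i * (1 - ⟪n, N i⟫) / s i := by
  have hnn : ⟪n, n⟫ = 1 := by
    rw [real_inner_self_eq_norm_sq, hn]; norm_num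
  have hℓ0 : ∀ i, ℓ i ≠ 0 := fun i => by
    rw [hℓ]; exact norm_ne_zero_iff.2 (sub_ne_zero.2 (hne i))
  -- key : inner of (n × edge) with a velocity vector q
  have key : ∀ i q, ⟪q, n⟫ = 1 → ⟪q, N i⟫ = 1 →
      ⟪cross3 n (f (i + 1) - f i), q⟫ = ℓ i * (⟪n, N i⟫ - 1) / s i := by
    intro i q hq1 hq2
    have hee : ⟪f (i + 1) - f i, f (i + 1) - f i⟫ = ℓ i ^ 2 := by
      rw [hℓ, real_inner_self_eq_norm_sq]
    have hne' : ⟪n, f (i + 1) - f i⟫ = 0 := by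
      have h1 := hf (i + 1); have h2 := hf i
      rw [inner3] at h1 h2
      simp only [inner3, PiLp.sub_apply]
      linarith
    have heN : ⟪f (i + 1) - f i, N i⟫ = 0 := horth i
    have hqe : ⟪cross3 n (f (i + 1) - f i), N i⟫ = -(ℓ i * s i) := by
      have h1 : ⟪cross3 n (N i), f (i + 1) - f i⟫ = ℓ i * s i := by
        rw [hs i, inner_smul_right, ← mul_assoc, mul_inv_cancel₀ (hℓ0 i), one_mul]
      rw [triple_swap, h1]
    have hq := quad3 n (f (i + 1) - f i) q (N i)
    rw [hqe, hnn, hee, hne', heN, hq1, hq2] at hq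
    rw [eq_div_iff (hs0 i)]
    have := mul_left_cancel₀ (hℓ0 i)
      (show ℓ i * (⟪cross3 n (f (i + 1) - f i), q⟫ * s i) = ℓ i * (ℓ i * (⟪n, N i⟫ - 1)) by
        linear_combination -hq)
    linarith [this]
  set g : ZMod m → ℝ := fun j => ⟪cross3 n (f j), fdot j⟫ with hg
  have main : ∀ i, ⟪cross3 (fdot i) (f (i + 1)), n⟫ + ⟪cross3 (f i) (fdot (i + 1)), n⟫
      = (g (i + 1) - g i) + 2 * (ℓ i * (1 - ⟪n, N i⟫) / s i) := by
    intro i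
    have A := key i (fdot i) (hfdot i) (hh1 i)
    have B := key i (fdot (i + 1)) (hfdot (i + 1)) (hh2 i)
    have structural : ⟪cross3 (fdot i) (f (i + 1)), n⟫ + ⟪cross3 (f i) (fdot (i + 1)), n⟫
        = (g (i + 1) - g i) - ⟪cross3 n (f (i + 1) - f i), fdot i⟫
          - ⟪cross3 n (f (i + 1) - f i), fdot (i + 1)⟫ := by
      simp only [hg, inner3, cross3, e3_0, e3_1, e3_2, PiLp.sub_apply]
      ring
    rw [structural, A, B]
    ring
  rw [Finset.sum_congr rfl (fun i _ => main i), Finset.sum_add_distrib]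
  have tele : ∑ i : ZMod m, (g (i + 1) - g i) = 0 := by
    rw [Finset.sum_sub_distrib, sub_eq_zero]
    exact Fintype.sum_equiv (Equiv.addRight (1 : ZMod m)) _ _ (fun i => rfl)
  rw [tele, zero_add, Finset.mul_sum]
  exact Finset.sum_congr rfl (fun i _ => by ring)
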